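/- For an odd natural number n > 1, the unit group (ℤ/nℤ)* contains a square root of -1 if and only if n is a sum of two coprime squares. -/

import Mathlib

open Zsqrtd EuclideanDomain in
/-- Key lemma: if `(n:ℤ) ∣ X^2 + 1` with `n` odd and positive, then `n` is a sum of two
coprime squares. Proved via the Gaussian integers. -/
theorem aux_sq_add_sq {n : ℕ} (hodd : Odd n) (hn0 : 0 < n) {X : ℤ}
    (hX : (n : ℤ) ∣ X ^ 2 + 1) :
    ∃ a b : ℤ, IsCoprime a b ∧ (n : ℤ) = a ^ 2 + b ^ 2 := by
  classical
  set A : GaussianInt := ⟨X, 1⟩ with hA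
  set d : GaussianInt := gcd (((n:ℤ)) : GaussianInt) A with hd
  have hd_n : d ∣ (((n:ℤ)) : GaussianInt) := gcd_dvd_left _ _
  have hd_A : d ∣ A := gcd_dvd_right _ _
  have hnz : (((n:ℤ)) : GaussianInt) ≠ 0 := by
    simpa using (Nat.cast_ne_zero.mpr hn0.ne' : (n : ℤ) ≠ 0)
  have hd0 : d ≠ 0 := by
    intro h
    rw [hd, EuclideanDomain.gcd_eq_zero_iff] at h
    exact hnz h.1
  have hstar_n : star ((n : ℤ) : GaussianInt) = ((n : ℤ) : GaussianInt) := by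
    ext <;> simp
  have hsd_n : star d ∣ (((n:ℤ)) : GaussianInt) := by
    rw [← hstar_n]
    simpa only [starRingEnd_apply] using map_dvd (starRingEnd GaussianInt) hd_n
  have hsd_A : star d ∣ star A := by
    have := map_dvd (starRingEnd GaussianInt) hd_A
    simpa only [starRingEnd_apply] using this
  -- norm of the cast of n
  have hnormn : Zsqrtd.norm ((n : ℤ) : GaussianInt) = (n : ℤ) * (n : ℤ) :=
    Zsqrtd.norm_intCast _
  -- d and star d are coprime
  have hcop_dd : IsCoprime d (star d) := by
    rw [← EuclideanDomain.gcd_isUnit_iff]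
    set c : GaussianInt := gcd d (star d) with hc
    have hc_d : c ∣ d := gcd_dvd_left _ _
    have hc_sd : c ∣ star d := gcd_dvd_right _ _
    have h1 : c ∣ (((n:ℤ)) : GaussianInt) := hc_d.trans hd_n
    have h2 : c ∣ A - star A := dvd_sub (hc_d.trans hd_A) (hc_sd.trans hsd_A)
    have h2' : A - star A = (⟨0, 2⟩ : GaussianInt) := by ext <;> simp [hA]
    have hn1 : c.norm ∣ (n : ℤ) * (n : ℤ) := by
      have := Zsqrtd.normMonoidHom.map_dvd h1
      simpa [Zsqrtd.normMonoidHom, hnormn] using this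
    have hn2 : c.norm ∣ 4 := by
      have := Zsqrtd.normMonoidHom.map_dvd (h2' ▸ h2)
      simpa [Zsqrtd.normMonoidHom, Zsqrtd.norm] using this
    have hcopr : IsCoprime (4 : ℤ) ((n : ℤ) * (n : ℤ)) := by
      rw [Int.isCoprime_iff_gcd_eq_one]
      have h2n : ¬ (2 : ℤ) ∣ (n : ℤ) * (n : ℤ) := by
        have hno : Odd ((n : ℤ) * (n : ℤ)) := by
          exact_mod_cast (hodd.mul hodd : Odd (n * n))
        rw [Int.two_dvd_ne_zero]
        exact Int.odd_iff.mp hno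
      by_contra hgcd
      obtain ⟨p, hp, hpd⟩ := Nat.exists_prime_and_dvd hgcd
      have hp4 : (p : ℤ) ∣ 4 := (Int.natCast_dvd_natCast.mpr hpd).trans (Int.gcd_dvd_left _ _)
      have hpn : (p : ℤ) ∣ (n : ℤ) * (n : ℤ) := (Int.natCast_dvd_natCast.mpr hpd).trans
        (Int.gcd_dvd_right _ _)
      have hp2 : p = 2 := by
        have hd4 : p ∣ 4 := by exact_mod_cast hp4
        have h2le := hp.two_le
        have h4le := Nat.le_of_dvd (by norm_num) hd4
        interval_cases p
        · rfl
        · exact absurd hd4 (by norm_num)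
        · exact absurd hp (by norm_num)
      rw [hp2] at hpn
      exact h2n (by exact_mod_cast hpn)
    have : IsUnit c.norm := hcopr.isUnit_of_dvd' hn2 hn1
    exact Zsqrtd.norm_eq_one_iff.mp (Int.isUnit_iff_natAbs_eq.mp this)
  -- norm d divides n
  have hdd_n : d * star d ∣ (((n:ℤ)) : GaussianInt) := hcop_dd.mul_dvd hd_n hsd_n
  have hnormd_n : d.norm ∣ (n : ℤ) := by
    rw [← Zsqrtd.intCast_dvd_intCast (d := (-1 : ℤ))]
    rwa [Zsqrtd.norm_eq_mul_conj]
  obtain ⟨m, hm⟩ := hnormd_n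
  obtain ⟨u, hu⟩ := hd_A
  -- Bezout gives coprimality
  obtain ⟨P, Q, hbez⟩ : ∃ P Q : GaussianInt, d = (((n:ℤ)) : GaussianInt) * P + A * Q :=
    ⟨_, _, gcd_eq_gcd_ab _ _⟩
  have hn_fact : (((n:ℤ)) : GaussianInt) = d * (star d * (m : ℤ)) := by
    have h1 : ((n : ℤ) : GaussianInt) = ((d.norm : ℤ) : GaussianInt) * ((m : ℤ) : GaussianInt) := by
      rw [hm]; push_cast; ring
    rw [h1, Zsqrtd.norm_eq_mul_conj]
    ring
  have hone : 1 = star d * (m : ℤ) * P + u * Q := by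
    have h := hbez
    rw [hn_fact, hu] at h
    have h' : d * 1 = d * (star d * (m : ℤ) * P + u * Q) := by
      rw [mul_one]; nth_rewrite 1 [h]; ring
    exact mul_left_cancel₀ hd0 h'
  have hcop1 : IsCoprime (star d * (m : ℤ)) u := ⟨P, Q, by linear_combination -hone⟩
  have hcop2 : IsCoprime (d * (m : ℤ)) (star u) := by
    have := hcop1.map (starRingEnd GaussianInt)
    have hsm : star ((m : ℤ) : GaussianInt) = ((m : ℤ) : GaussianInt) := by ext <;> simp
    simpa only [starRingEnd_apply, star_mul', star_star, hsm, mul_comm] using this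
  -- m ∣ u * star u
  have hAA : A * star A = ((X ^ 2 + 1 : ℤ) : GaussianInt) := by
    have := Zsqrtd.norm_eq_mul_conj A
    rw [← this]
    congr 1
    simp [Zsqrtd.norm, hA]
    ring
  have hnAA : (((n:ℤ)) : GaussianInt) ∣ A * star A := by
    rw [hAA]
    exact (Zsqrtd.intCast_dvd_intCast (d := (-1:ℤ)) _ _).mpr hX
  have hm_dvd : ((m : ℤ) : GaussianInt) ∣ u * star u := by
    have h := hnAA
    rw [hn_fact, hu] at h
    have hds0 : d * star d ≠ 0 := mul_ne_zero hd0 (star_ne_zero.mpr hd0)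
    obtain ⟨w, hw⟩ := h
    refine ⟨w, mul_left_cancel₀ hds0 ?_⟩
    calc d * star d * (u * star u) = d * u * star (d * u) := by
          rw [star_mul']; ring
      _ = d * (star d * (m : ℤ)) * w := hw
      _ = d * star d * (((m : ℤ) : GaussianInt) * w) := by ring
  -- (m : GaussianInt) is a unit
  have hm_unit : IsUnit ((m : ℤ) : GaussianInt) := by
    by_contra hnu
    have hm0 : ((m : ℤ) : GaussianInt) ≠ 0 := by
      intro h
      rw [Int.cast_eq_zero.mp h, mul_zero] at hm
      exact (Nat.cast_ne_zero.mpr hn0.ne' : (n : ℤ) ≠ 0) hm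
    obtain ⟨π, hπ_irr, hπ_dvd⟩ := WfDvdMonoid.exists_irreducible_factor hnu hm0
    have hπ_prime : Prime π := hπ_irr.prime
    rcases hπ_prime.2.2 _ _ (hπ_dvd.trans hm_dvd) with h | h
    · exact hπ_irr.not_isUnit
        (hcop1.isUnit_of_dvd' (hπ_dvd.trans (dvd_mul_left _ _)) h)
    · exact hπ_irr.not_isUnit
        (hcop2.isUnit_of_dvd' (hπ_dvd.trans (dvd_mul_left _ _)) h)
  -- conclude m = 1
  have hm1 : m = 1 := by
    have h1 : (m * m).natAbs = 1 := by
      rw [← Zsqrtd.norm_intCast (d := (-1 : ℤ))]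
      exact Zsqrtd.norm_eq_one_iff.mpr hm_unit
    have hnpos : (0 : ℤ) < (n : ℤ) := by exact_mod_cast hn0
    have hdn : 0 ≤ d.norm := Zsqrtd.norm_nonneg (by norm_num) d
    rw [Int.natAbs_mul] at h1
    have : m.natAbs = 1 := Nat.eq_one_of_mul_eq_one_right h1
    rcases Int.natAbs_eq_iff.mp this with h | h
    · exact h
    · exfalso; rw [h] at hm; nlinarith
  refine ⟨d.re, d.im, ?_, ?_⟩
  · rw [Int.isCoprime_iff_gcd_eq_one]
    by_contra hgcd
    obtain ⟨p, hp, hpd⟩ := Nat.exists_prime_and_dvd hgcd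
    have hpre : (p : ℤ) ∣ d.re := (Int.natCast_dvd_natCast.mpr hpd).trans (Int.gcd_dvd_left _ _)
    have hpim : (p : ℤ) ∣ d.im := (Int.natCast_dvd_natCast.mpr hpd).trans (Int.gcd_dvd_right _ _)
    have hpd' : ((p : ℤ) : GaussianInt) ∣ d := (Zsqrtd.intCast_dvd _ _).mpr ⟨hpre, hpim⟩
    have hpsd : ((p : ℤ) : GaussianInt) ∣ star d :=
      (Zsqrtd.intCast_dvd _ _).mpr ⟨by rwa [Zsqrtd.re_star], by rw [Zsqrtd.im_star]; exact hpim.neg_right⟩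
    have := hcop_dd.isUnit_of_dvd' hpd' hpsd
    have h1 : (((p : ℤ)) * (p : ℤ)).natAbs = 1 := by
      rw [← Zsqrtd.norm_intCast (d := (-1 : ℤ))]
      exact Zsqrtd.norm_eq_one_iff.mpr this
    rw [Int.natAbs_mul, Int.natAbs_natCast] at h1
    have := hp.one_lt
    nlinarith
  · rw [hm, hm1, mul_one, Zsqrtd.norm]
    ring

theorem stmt_9 (n : ℕ) (hodd : Odd n) (hn : 1 < n) :
    (∃ x : (ZMod n)ˣ, x ^ 2 = -1) ↔
    (∃ a b : ℤ, IsCoprime a b ∧ (n : ℤ) = a ^ 2 + b ^ 2) := by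
  haveI : NeZero n := ⟨by omega⟩
  constructor
  · rintro ⟨x, hx⟩
    set X : ℤ := ((x : ZMod n).val : ℤ) with hX
    have hXmod : ((X : ZMod n)) = (x : ZMod n) := by
      simp [hX, ZMod.natCast_val, ZMod.intCast_cast]
    have hdvd : (n : ℤ) ∣ X ^ 2 + 1 := by
      rw [← ZMod.intCast_zmod_eq_zero_iff_dvd]
      push_cast
      rw [hXmod]
      have : ((x : ZMod n)) ^ 2 = -1 := by
        have := congrArg (Units.val) hx
        push_cast at this
        simpa using this
      rw [this]; ring
    exact aux_sq_add_sq hodd (by omega) hdvd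
  · rintro ⟨a, b, hab, habn⟩
    have h : IsSquare (-1 : ZMod ((n : ℤ)).natAbs) :=
      ZMod.isSquare_neg_one_of_eq_sq_add_sq_of_isCoprime habn hab
    rw [Int.natAbs_natCast] at h
    obtain ⟨y, hy⟩ := h
    have hyu : y * (-y) = 1 := by rw [← neg_mul_eq_mul_neg, ← hy]; ring
    refine ⟨Units.mkOfMulEqOne y (-y) hyu, ?_⟩
    ext
    rw [Units.val_pow_eq_pow_val, Units.val_neg, Units.val_one]
    have hval : ((Units.mkOfMulEqOne y (-y) hyu : (ZMod n)ˣ) : ZMod n) = y := rfl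
    rw [hval, sq, ← hy]
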